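/- Let A and B be complex Banach algebras of complex-valued functions on a set X (with pointwise operations) such that A contains all constant functions on X, let ψ : A → B be a continuous algebra homomorphism and φ a character of B. Let F denote the linear span of the set of all f ∈ A that satisfy P(f) = 0 for some nonzero polynomial P in one variable. If F is dense in A with respect to the norm of A, then 𝔇_{(φ,ψ)} = {0}. -/

import Mathlib

open WeakDual

/-- Let `A` and `B` be complex Banach algebras of complex-valued functions on
a set `X` (realized via injective algebra homomorphisms into `X → ℂ`) such that `A` contains
all constant functions, `ψ : A → B` a continuous algebra homomorphism and `φ` a character of
`B`.  If the linear span `F` of the set of all `f ∈ A` satisfying a polynomial identity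
`P(f) = 0` (as a function on `X`, for some nonzero one-variable polynomial `P`) is dense in
`A`, then `𝔇_{(φ,ψ)} = {0}`. -/
theorem pointDerivations_eq_zero_of_denseSpan_polynomialIdentity
    {X : Type*} {A B : Type*} [NormedRing A] [NormedAlgebra ℂ A] [CompleteSpace A]
    [NormedRing B] [NormedAlgebra ℂ B] [CompleteSpace B]
    (jA : A →ₐ[ℂ] (X → ℂ)) (hjA : Function.Injective jA)
    (jB : B →ₐ[ℂ] (X → ℂ)) (hjB : Function.Injective jB)
    (hconst : ∀ c : ℂ, (fun _ : X => c) ∈ Set.range jA)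
    (ψ : A →L[ℂ] B) (hψ : ∀ a b : A, ψ (a * b) = ψ a * ψ b)
    (φ : characterSpace ℂ B)
    (hdense : Dense ((Submodule.span ℂ
        {f : A | ∃ P : Polynomial ℂ, P ≠ 0 ∧ ∀ x : X, P.eval (jA f x) = 0} :
          Submodule ℂ A) : Set A)) :
    {D : A →L[ℂ] ℂ | ∀ a b : A, D (a * b) = φ (ψ a) * D b + φ (ψ b) * D a} = {0} := by
  ext D
  simp only [Set.mem_setOf_eq, Set.mem_singleton_iff]
  constructor
  · intro hD
    -- χ := φ ∘ ψ is multiplicative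
    have hχ : ∀ a b : A, φ (ψ (a * b)) = φ (ψ a) * φ (ψ b) := by
      intro a b; rw [hψ, map_mul]
    -- D vanishes on idempotents
    have hidem : ∀ e : A, e * e = e → D e = 0 := by
      intro e he
      have h1 : D e = φ (ψ e) * D e + φ (ψ e) * D e := by
        conv_lhs => rw [← he]
        exact hD e e
      have h2 : φ (ψ e) * φ (ψ e) = φ (ψ e) := by rw [← hχ e e, he]
      have h0 : φ (ψ e) * (φ (ψ e) - 1) = 0 := by linear_combination h2
      rcases mul_eq_zero.mp h0 with h | h
      · rw [h] at h1; simpa using h1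
      · have h' : φ (ψ e) = 1 := by linear_combination h
        rw [h'] at h1
        linear_combination (-1 : ℂ) * h1
    -- D vanishes on the generating set
    have hgen : ∀ f ∈ {f : A | ∃ P : Polynomial ℂ, P ≠ 0 ∧ ∀ x : X, P.eval (jA f x) = 0},
        D f = 0 := by
      rintro f ⟨P, hP, hroot⟩
      set g : X → ℂ := fun x => jA f x with hg
      have hfin : (Set.range g).Finite := by
        refine (Polynomial.finite_setOf_isRoot hP).subset ?_
        rintro _ ⟨x, rfl⟩
        exact hroot x
      set T : Finset ℂ := hfin.toFinset with hT
      have hmem : ∀ x, g x ∈ T := fun x => hfin.mem_toFinset.mpr ⟨x, rfl⟩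
      set e : ℂ → A := fun s => Polynomial.aeval f (Lagrange.basis T id s) with he
      have heval : ∀ (s : ℂ) (x : X), jA (e s) x = if g x = s then 1 else 0 := by
        intro s x
        have h1 : jA (e s) = Polynomial.aeval (jA f) (Lagrange.basis T id s) :=
          (Polynomial.aeval_algHom_apply jA f _).symm
        have h2 : jA (e s) x = (Lagrange.basis T id s).eval (g x) := by
          rw [h1]
          have := (Polynomial.aeval_algHom_apply (Pi.evalAlgHom ℂ (fun _ : X => ℂ) x)
            (jA f) (Lagrange.basis T id s)).symm
          rw [← Polynomial.coe_aeval_eq_eval]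
          exact this
        rw [h2]
        by_cases hxs : g x = s
        · subst hxs
          simp only [if_pos rfl]
          exact Lagrange.eval_basis_self (Set.injOn_id _) (hmem x)
        · rw [if_neg hxs]
          have := Lagrange.eval_basis_of_ne (s := T) (v := id) (i := s) (j := g x)
            (fun h => hxs h.symm) (hmem x)
          simpa using this
      have hie : ∀ s : ℂ, e s * e s = e s := by
        intro s
        apply hjA
        rw [map_mul]
        funext x
        simp only [Pi.mul_apply, heval]
        by_cases hxs : g x = s <;> simp [hxs]
      have hsum : f = ∑ s ∈ T, s • e s := by
        apply hjA
        rw [map_sum]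
        funext x
        simp only [Finset.sum_apply, map_smul, Pi.smul_apply, heval, smul_eq_mul, mul_ite,
          mul_one, mul_zero]
        rw [Finset.sum_ite_eq]
        simp [hmem x]
        rfl
      rw [hsum, map_sum]
      refine Finset.sum_eq_zero fun s _ => ?_
      rw [map_smul, hidem (e s) (hie s), smul_zero]
    -- D vanishes on the span, hence everywhere by density and continuity
    have hker : ∀ a ∈ (Submodule.span ℂ
        {f : A | ∃ P : Polynomial ℂ, P ≠ 0 ∧ ∀ x : X, P.eval (jA f x) = 0} :
          Submodule ℂ A), D a = 0 := by
      intro a ha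
      have : (Submodule.span ℂ
          {f : A | ∃ P : Polynomial ℂ, P ≠ 0 ∧ ∀ x : X, P.eval (jA f x) = 0}) ≤
          LinearMap.ker (D : A →ₗ[ℂ] ℂ) := by
        rw [Submodule.span_le]
        intro f hf
        exact hgen f hf
      exact this ha
    have : (D : A → ℂ) = (0 : A →L[ℂ] ℂ) := by
      refine Continuous.ext_on hdense D.continuous continuous_const ?_
      intro a ha
      simpa using hker a ha
    ext a
    exact congrFun this a
  · rintro rfl
    intro a b
    simp
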